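/- The mean measure tail of the scaled maximal cycle converges to θE_1(x): with m = ⌊x e^t⌋, θ∑_{k=m+1}^∞ (1−e^{-t})^k/k → θ∫_x^∞ (e^{-s}/s) ds as t → ∞, for each fixed x > 0. -/

import Mathlib

open MeasureTheory Filter Real Set Topology

-- Lemma 1: tail sum = integral
lemma tail_eq_integral (q : ℝ) (hq0 : 0 ≤ q) (hq1 : q < 1) (m : ℕ) :
    ∑' j : ℕ, q ^ (m + 1 + j) / ((m + 1 + j : ℕ) : ℝ)
      = ∫ u in Set.Ioo (0:ℝ) q, u ^ m / (1 - u) := by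
  have key : ∀ n : ℕ, ∫ u in Set.Ioo (0:ℝ) q, u ^ n = q ^ (n+1) / (n+1) := by
    intro n
    rw [← MeasureTheory.integral_Ioc_eq_integral_Ioo, ← intervalIntegral.integral_of_le hq0,
      integral_pow]
    simp
  have hs : HasSum (fun n : ℕ => ∫ u in Set.Ioo (0:ℝ) q, u ^ (m + n))
      (∫ u in Set.Ioo (0:ℝ) q, u ^ m / (1 - u)) := by
    apply MeasureTheory.hasSum_integral_of_dominated_convergence
      (bound := fun n _ => q ^ (m + n))
    · intro n; exact (measurable_id.pow_const _).aestronglyMeasurable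
    · intro n
      filter_upwards [self_mem_ae_restrict measurableSet_Ioo] with a ha
      rw [Real.norm_eq_abs, abs_of_nonneg (pow_nonneg ha.1.le _)]
      exact pow_le_pow_left₀ ha.1.le ha.2.le _
    · filter_upwards with a
      exact (summable_geometric_of_lt_one hq0 hq1).comp_injective (add_right_injective m)
    · exact integrable_const _
    · filter_upwards [self_mem_ae_restrict measurableSet_Ioo] with a ha
      have h := (hasSum_geometric_of_lt_one ha.1.le (ha.2.trans hq1)).mul_left (a ^ m)
      have : a ^ m / (1 - a) = a ^ m * (1 - a)⁻¹ := div_eq_mul_inv _ _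
      rw [this]
      exact h.congr_fun fun n => pow_add a m n
  rw [← hs.tsum_eq]
  refine tsum_congr fun n => ?_
  rw [key (m + n)]
  push_cast
  ring_nf

-- Lemma 2: change of variables
lemma subst_lemma (x t : ℝ) (hx : 0 < x) (ht : 0 ≤ t) (m : ℕ) :
    ∫ u in Set.Ioo (0:ℝ) (1 - Real.exp (-t)), u ^ m / (1 - u)
      = ∫ s in Set.Ioc x (x * Real.exp t), (1 - Real.exp (-t) * s / x) ^ m / s := by
  have he : (0:ℝ) < Real.exp (-t) := Real.exp_pos _
  have hexp_le : Real.exp (-t) ≤ 1 := by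
    rw [← Real.exp_zero]; exact Real.exp_le_exp.mpr (by linarith)
  have hq0 : (0:ℝ) ≤ 1 - Real.exp (-t) := by linarith
  have h1 : (1:ℝ) ≤ Real.exp t := by rw [← Real.exp_zero]; exact Real.exp_le_exp.mpr ht
  have hx_le : x ≤ x * Real.exp t := le_mul_of_one_le_right hx.le h1
  set c : ℝ := -(Real.exp (-t)) / x with hcdef
  have hc : c ≠ 0 := ne_of_lt (div_neg_of_neg_of_pos (neg_lt_zero.mpr he) hx)
  rw [← MeasureTheory.integral_Ioc_eq_integral_Ioo, ← intervalIntegral.integral_of_le hq0,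
    ← intervalIntegral.integral_of_le hx_le]
  have hEq : Set.EqOn (fun s : ℝ => (1 - Real.exp (-t) * s / x) ^ m / s)
      (fun s : ℝ => (Real.exp (-t) / x) • ((fun u : ℝ => u ^ m / (1 - u)) (c * s + 1)))
      (Set.uIcc x (x * Real.exp t)) := by
    intro s hs
    rw [Set.uIcc_of_le hx_le] at hs
    have hs0 : s ≠ 0 := ne_of_gt (lt_of_lt_of_le hx hs.1)
    have h1s : 1 - (c * s + 1) = Real.exp (-t) * s / x := by rw [hcdef]; ring
    have h2s : c * s + 1 = 1 - Real.exp (-t) * s / x := by rw [hcdef]; ring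
    simp only [smul_eq_mul, h1s, h2s]
    field_simp
    ring
  rw [intervalIntegral.integral_congr hEq, intervalIntegral.integral_smul,
    intervalIntegral.integral_comp_mul_add (fun u : ℝ => u ^ m / (1 - u)) hc 1]
  have e1 : c * x + 1 = 1 - Real.exp (-t) := by rw [hcdef]; field_simp; ring
  have e2 : c * (x * Real.exp t) + 1 = 0 := by
    rw [hcdef, Real.exp_neg]; field_simp; ring
  rw [e1, e2, intervalIntegral.integral_symm, smul_smul]
  have hcc : Real.exp (-t) / x * c⁻¹ = -1 := by
    rw [hcdef]; field_simp
  rw [hcc]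
  simp

-- pointwise limit
lemma pow_tendsto (x s : ℝ) (hx : 0 < x) (hs : 0 < s) :
    Filter.Tendsto (fun t : ℝ => (1 - Real.exp (-t) * s / x) ^ ⌊x * Real.exp t⌋₊)
      Filter.atTop (𝓝 (Real.exp (-s))) := by
  set a : ℝ → ℝ := fun t => Real.exp (-t) * s / x with hadef
  set m : ℝ → ℕ := fun t => ⌊x * Real.exp t⌋₊ with hmdef
  have ha_pos : ∀ t, 0 < a t := fun t => by
    simp only [hadef]; positivity
  have ha0 : Tendsto a atTop (𝓝 0) := by
    have : Tendsto (fun t : ℝ => Real.exp (-t)) atTop (𝓝 0) :=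
      Real.tendsto_exp_neg_atTop_nhds_zero
    simpa [hadef] using (this.mul_const s).div_const x
  -- m t * a t → s
  have hma : Tendsto (fun t => (m t : ℝ) * a t) atTop (𝓝 s) := by
    apply tendsto_of_tendsto_of_tendsto_of_le_of_le'
      (g := fun t => s - a t) (h := fun t => s)
    · simpa using tendsto_const_nhds.sub ha0
    · exact tendsto_const_nhds
    · filter_upwards with t
      have h1 : x * Real.exp t - 1 < (m t : ℝ) := Nat.sub_one_lt_floor _
      have h2 : s - a t = (x * Real.exp t - 1) * a t := by
        simp only [hadef]
        rw [Real.exp_neg]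
        field_simp
      rw [h2]
      exact mul_le_mul_of_nonneg_right h1.le (ha_pos t).le
    · filter_upwards with t
      have h1 : (m t : ℝ) ≤ x * Real.exp t := Nat.floor_le (by positivity)
      have h2 : (x * Real.exp t) * a t = s := by
        simp only [hadef]
        rw [Real.exp_neg]
        field_simp
      calc (m t : ℝ) * a t ≤ (x * Real.exp t) * a t :=
            mul_le_mul_of_nonneg_right h1 (ha_pos t).le
        _ = s := h2
  -- log(1 - a t)/a t → -1
  have hslope : Tendsto (fun t => Real.log (1 - a t) / a t) atTop (𝓝 (-1)) := by
    have h0 : HasDerivAt (fun y : ℝ => 1 - y) (-1) 0 := by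
      simpa using (hasDerivAt_id (0:ℝ)).const_sub 1
    have hlog : HasDerivAt Real.log 1 ((fun y : ℝ => 1 - y) 0) := by
      simpa using Real.hasDerivAt_log (by norm_num : (1:ℝ) - 0 ≠ 0)
    have hd : HasDerivAt (fun y : ℝ => Real.log (1 - y)) (-1) 0 := by
      have h2 := hlog.comp 0 h0
      rw [one_mul] at h2
      exact h2
    have hsl := hasDerivAt_iff_tendsto_slope.mp hd
    have ha' : Tendsto a atTop (𝓝[≠] (0:ℝ)) :=
      tendsto_nhdsWithin_of_tendsto_nhds_of_eventually_within _ ha0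
        (Filter.Eventually.of_forall fun t => (ha_pos t).ne')
    have := hsl.comp ha'
    apply this.congr
    intro t
    simp [slope_def_field, Real.log_one]
  -- m t * log(1 - a t) → -s
  have hml : Tendsto (fun t => (m t : ℝ) * Real.log (1 - a t)) atTop (𝓝 (-s)) := by
    have := hma.mul hslope
    rw [show s * (-1) = -s by ring] at this
    apply this.congr
    intro t
    have hne := (ha_pos t).ne'
    show (m t : ℝ) * a t * (Real.log (1 - a t) / a t) = (m t : ℝ) * Real.log (1 - a t)
    rw [mul_assoc, mul_comm (a t), div_mul_cancel₀ _ hne]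
  -- conclude via exp
  have hexp := (Real.continuous_exp.tendsto (-s)).comp hml
  apply hexp.congr'
  filter_upwards [ha0.eventually_lt_const (by norm_num : (0:ℝ) < 1)] with t ht
  have h1a : 0 < 1 - a t := by linarith
  simp only [Function.comp]
  rw [Real.exp_nat_mul, Real.exp_log h1a]

lemma tendsto_integral_part (x : ℝ) (hx : 0 < x) :
    Filter.Tendsto (fun t : ℝ => ∫ s in Set.Ioi x, Set.indicator (Set.Ioc x (x * Real.exp t))
        (fun s => (1 - Real.exp (-t) * s / x) ^ ⌊x * Real.exp t⌋₊ / s) s)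
      Filter.atTop (𝓝 (∫ s in Set.Ioi x, Real.exp (-s) / s)) := by
  apply MeasureTheory.tendsto_integral_filter_of_dominated_convergence
    (bound := fun s => Real.exp (-(1/2) * s) / x)
  · filter_upwards with t
    apply Measurable.aestronglyMeasurable
    apply Measurable.indicator _ measurableSet_Ioc
    fun_prop
  · filter_upwards [eventually_ge_atTop (Real.log (2 / x))] with t ht
    have hexp_le : Real.exp (-t) ≤ x / 2 := by
      have h1 : (2:ℝ) / x ≤ Real.exp t := by
        calc (2:ℝ)/x = Real.exp (Real.log (2/x)) := (Real.exp_log (by positivity)).symm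
          _ ≤ Real.exp t := Real.exp_le_exp.mpr ht
      have h2 : ((2:ℝ)/x)⁻¹ * 2 / x ≤ 1 := by field_simp; exact le_rfl
      rw [Real.exp_neg]
      calc (Real.exp t)⁻¹ ≤ ((2:ℝ)/x)⁻¹ := by
            apply inv_anti₀ (by positivity) h1
        _ = x / 2 := by rw [inv_div]
    rw [MeasureTheory.ae_restrict_iff' measurableSet_Ioi]
    filter_upwards with s hs
    by_cases hmem : s ∈ Set.Ioc x (x * Real.exp t)
    · rw [Set.indicator_of_mem hmem]
      have hsx : x < s := hmem.1
      have hs0 : 0 < s := hx.trans hsx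
      set n := ⌊x * Real.exp t⌋₊ with hn
      have ha1 : Real.exp (-t) * s / x ≤ 1 := by
        rw [div_le_one hx]
        calc Real.exp (-t) * s ≤ Real.exp (-t) * (x * Real.exp t) :=
              mul_le_mul_of_nonneg_left hmem.2 (Real.exp_pos _).le
          _ = x := by rw [Real.exp_neg]; field_simp
      have ha0 : 0 ≤ Real.exp (-t) * s / x := by positivity
      have h1a : 0 ≤ 1 - Real.exp (-t) * s / x := by linarith
      have hpow : (1 - Real.exp (-t) * s / x) ^ n ≤ Real.exp (-(1/2) * s) := by
        have hle : 1 - Real.exp (-t) * s / x ≤ Real.exp (-(Real.exp (-t) * s / x)) := by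
          have := Real.add_one_le_exp (-(Real.exp (-t) * s / x)); linarith
        calc (1 - Real.exp (-t) * s / x) ^ n
            ≤ (Real.exp (-(Real.exp (-t) * s / x))) ^ n := pow_le_pow_left₀ h1a hle n
          _ = Real.exp ((n : ℝ) * (-(Real.exp (-t) * s / x))) := (Real.exp_nat_mul _ n).symm
          _ ≤ Real.exp (-(1/2) * s) := by
              apply Real.exp_le_exp.mpr
              have hfl : x * Real.exp t - 1 ≤ (n:ℝ) := (Nat.sub_one_lt_floor _).le
              have h3 : Real.exp (-t) * s / x ≤ s / 2 := by
                rw [div_le_iff₀ hx]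
                nlinarith [hexp_le, hs0.le, Real.exp_pos (-t)]
              have expand : (x * Real.exp t - 1) * (Real.exp (-t) * s / x)
                  = s - Real.exp (-t) * s / x := by
                rw [Real.exp_neg]; field_simp
              nlinarith [mul_le_mul_of_nonneg_right hfl ha0]
      rw [Real.norm_eq_abs, abs_of_nonneg (by positivity)]
      exact div_le_div₀ (Real.exp_pos _).le hpow hx hsx.le
    · rw [Set.indicator_of_notMem hmem]
      simp only [norm_zero]
      positivity
  · exact (exp_neg_integrableOn_Ioi x (by norm_num : (0:ℝ) < 1/2)).div_const x
  · rw [MeasureTheory.ae_restrict_iff' measurableSet_Ioi]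
    filter_upwards with s hs
    have hs' : x < s := hs
    have hxe : Tendsto (fun t : ℝ => x * Real.exp t) atTop atTop :=
      (Real.tendsto_exp_atTop.const_mul_atTop hx)
    apply Filter.Tendsto.congr' _ ((pow_tendsto x s hx (hx.trans hs')).div_const s)
    filter_upwards [hxe.eventually_ge_atTop s] with t hts
    exact (Set.indicator_of_mem (Set.mem_Ioc.mpr ⟨hs', hts⟩) _).symm

/-- The mean measure tail of the scaled maximal cycle converges to `θ E_1(x)`:
with `m = ⌊x e^t⌋`, `θ ∑_{k=m+1}^∞ (1-e^{-t})^k/k → θ ∫_x^∞ e^{-s}/s ds` as `t → ∞`. -/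
theorem mean_measure_tail (θ x : ℝ) (hθ : 0 < θ) (hx : 0 < x) :
    Filter.Tendsto
      (fun t : ℝ => θ * ∑' j : ℕ,
        (1 - Real.exp (-t)) ^ (⌊x * Real.exp t⌋₊ + 1 + j)
          / ((⌊x * Real.exp t⌋₊ + 1 + j : ℕ) : ℝ))
      Filter.atTop
      (nhds (θ * ∫ s in Set.Ioi x, Real.exp (-s) / s)) := by
  apply Filter.Tendsto.const_mul θ
  apply Filter.Tendsto.congr' _ (tendsto_integral_part x hx)
  filter_upwards [eventually_gt_atTop (0:ℝ)] with t ht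
  have hq0 : (0:ℝ) ≤ 1 - Real.exp (-t) := by
    have : Real.exp (-t) ≤ 1 := by
      rw [← Real.exp_zero]; exact Real.exp_le_exp.mpr (by linarith)
    linarith
  have hq1 : 1 - Real.exp (-t) < 1 := by have := Real.exp_pos (-t); linarith
  rw [tail_eq_integral _ hq0 hq1 ⌊x * Real.exp t⌋₊, subst_lemma x t hx ht.le,
    MeasureTheory.setIntegral_indicator measurableSet_Ioc,
    Set.inter_eq_self_of_subset_right Set.Ioc_subset_Ioi_self]
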